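/- Let A be a Noetherian local ring and I₁, I₂ two ideals primary for the maximal ideal of A with the same integral closure Ī₁ = Ī₂. Then I₁ and I₂ have the same Hilbert–Samuel multiplicity. -/

import Mathlib

open Filter ENNReal Topology

/-- `f` is integral over the ideal `I`: there is an equation
`f^k + a₁ f^(k-1) + ⋯ + a_k = 0` with `aᵢ ∈ Iⁱ` (and `k ≥ 1`). -/
def IsIntegralOverIdeal {A : Type*} [CommRing A] (I : Ideal A) (f : A) : Prop :=
  ∃ (k : ℕ) (a : ℕ → A), 0 < k ∧ (∀ i ∈ Finset.Icc 1 k, a i ∈ I ^ i) ∧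
    f ^ k + ∑ i ∈ Finset.Icc 1 k, a i * f ^ (k - i) = 0

/-- The length of an `A`-module `M` (the supremum of lengths of strictly increasing
chains of submodules), as an extended nonnegative real. -/
noncomputable def moduleLength (A M : Type*) [CommRing A] [AddCommGroup M] [Module A M] :
    ℝ≥0∞ :=
  ⨆ p : LTSeries (Submodule A M), (p.length : ℝ≥0∞)

-- auxiliary: monotonicity of length of quotients
lemma moduleLength_quot_mono {A : Type*} [CommRing A] {P Q : Ideal A} (h : P ≤ Q) :
    moduleLength A (A ⧸ Q) ≤ moduleLength A (A ⧸ P) := by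
  classical
  set φ : Submodule A (A ⧸ Q) → Submodule A (A ⧸ P) :=
    fun S => Submodule.map P.mkQ (Submodule.comap Q.mkQ S) with hφdef
  have hinj : Function.Injective φ := by
    intro S₁ S₂ hS
    have key : ∀ S : Submodule A (A ⧸ Q),
        Submodule.comap P.mkQ (φ S) = Submodule.comap Q.mkQ S := by
      intro S
      rw [hφdef]
      rw [Submodule.comap_map_eq, Submodule.ker_mkQ, sup_eq_left.2]
      calc P ≤ Q := h
        _ = Submodule.comap Q.mkQ ⊥ := by rw [Submodule.comap_bot, Submodule.ker_mkQ]
        _ ≤ Submodule.comap Q.mkQ S := Submodule.comap_mono bot_le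
    have := key S₁
    rw [hS, key S₂] at this
    exact (Submodule.comap_injective_of_surjective (Submodule.mkQ_surjective Q) this).symm
  have hmono : StrictMono φ := by
    have : Monotone φ := fun a b hab =>
      Submodule.map_mono (Submodule.comap_mono hab)
    exact this.strictMono_of_injective hinj
  refine iSup_le fun p => ?_
  exact le_iSup_of_le (p.map φ hmono) (by simp)

/-- The Hilbert–Samuel multiplicity of an ideal `I` in a `d`-dimensional Noetherian
local ring: `e(I) = lim_{n→∞} d! · ℓ(A/Iⁿ)/n^d` (the limit exists; we use `limsup`). -/
noncomputable def hilbertSamuelMult {A : Type*} [CommRing A] (I : Ideal A) (d : ℕ) :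
    ℝ≥0∞ :=
  Filter.atTop.limsup fun n : ℕ =>
    (Nat.factorial d : ℝ≥0∞) * moduleLength A (A ⧸ I ^ n) / (n : ℝ≥0∞) ^ d

section Alg

variable {A : Type*} [CommRing A]

lemma mem_integral_self {I : Ideal A} {f : A} (hf : f ∈ I) : IsIntegralOverIdeal I f := by
  refine ⟨1, fun _ => -f, one_pos, ?_, ?_⟩
  · intro i hi
    simp only [Finset.mem_Icc] at hi
    have : i = 1 := le_antisymm hi.2 hi.1
    subst this
    simpa using I.neg_mem hf
  · simp

lemma integral_mono {I J : Ideal A} (h : I ≤ J) {f : A}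
    (hf : IsIntegralOverIdeal I f) : IsIntegralOverIdeal J f := by
  obtain ⟨k, a, hk, ha, heq⟩ := hf
  exact ⟨k, a, hk, fun i hi => Ideal.pow_right_mono h i (ha i hi), heq⟩

/-- single-element determinant-free lemma -/
lemma exists_pow_le_of_integral_singleton {I : Ideal A} {f : A}
    (hf : IsIntegralOverIdeal I f) :
    ∃ k : ℕ, ∀ n : ℕ, (I ⊔ Ideal.span {f}) ^ (n + k) ≤ I ^ n := by
  obtain ⟨k, a, hk, ha, heq⟩ := hf
  set J : Ideal A := I ⊔ Ideal.span {f} with hJ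
  have hfJ : f ∈ J := Submodule.mem_sup_right (Ideal.subset_span (Set.mem_singleton f))
  -- f^k ∈ I * J^(k-1)
  have hfk : f ^ k ∈ I * J ^ (k - 1) := by
    have : f ^ k = -∑ i ∈ Finset.Icc 1 k, a i * f ^ (k - i) := by
      linear_combination heq
    rw [this]
    refine neg_mem (Submodule.sum_mem _ fun i hi => ?_)
    simp only [Finset.mem_Icc] at hi
    have hai : a i ∈ I * J ^ (i - 1) := by
      have h1 : I ^ i ≤ I * J ^ (i - 1) := by
        have : I ^ i = I * I ^ (i - 1) := by
          conv_lhs => rw [show i = 1 + (i - 1) by omega]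
          rw [pow_add, pow_one]
        rw [this]
        exact Ideal.mul_mono_right (Ideal.pow_right_mono le_sup_left _)
      exact h1 (ha i (Finset.mem_Icc.2 hi))
    have hfp : f ^ (k - i) ∈ J ^ (k - i) := Ideal.pow_mem_pow hfJ _
    have := Ideal.mul_mem_mul hai hfp
    rw [mul_assoc, ← pow_add] at this
    have harith : i - 1 + (k - i) = k - 1 := by omega
    rwa [harith] at this
  -- J^m ≤ I * J^(m-1) ⊔ span {f^m} for 1 ≤ m
  have claim : ∀ m : ℕ, 1 ≤ m → J ^ m ≤ I * J ^ (m - 1) ⊔ Ideal.span {f ^ m} := by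
    intro m
    induction m with
    | zero => omega
    | succ m ih =>
      intro _
      rcases Nat.eq_zero_or_pos m with hm | hm
      · subst hm
        simp [hJ]
      · have step := ih hm
        have hJm : J * J ^ (m - 1) = J ^ m := by
          rw [← pow_succ']; congr 1; omega
        calc J ^ (m + 1) = J * J ^ m := by rw [pow_succ, mul_comm]
          _ ≤ J * (I * J ^ (m - 1) ⊔ Ideal.span {f ^ m}) := Ideal.mul_mono_right step
          _ = J * (I * J ^ (m - 1)) ⊔ J * Ideal.span {f ^ m} := Ideal.mul_sup _ _ _
          _ ≤ I * J ^ (m + 1 - 1) ⊔ Ideal.span {f ^ (m + 1)} := by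
              rw [Nat.add_sub_cancel]
              refine sup_le ?_ ?_
              · refine le_trans (le_of_eq ?_) le_sup_left
                rw [show J * (I * J ^ (m - 1)) = I * (J * J ^ (m - 1)) by ring, hJm]
              · rw [hJ, Ideal.sup_mul]
                refine sup_le ?_ ?_
                · refine le_trans ?_ le_sup_left
                  exact Ideal.mul_mono_right (by
                    rw [Ideal.span_le]
                    rintro x rfl
                    exact SetLike.mem_coe.2 (Ideal.pow_mem_pow hfJ m))
                · rw [Ideal.span_singleton_mul_span_singleton, ← pow_succ']
                  exact le_sup_right
  have base : J ^ k ≤ I * J ^ (k - 1) := by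
    refine (claim k hk).trans (sup_le le_rfl ?_)
    rw [Ideal.span_le]
    rintro x rfl
    exact SetLike.mem_coe.2 hfk
  have step1 : J ^ (k + 1) ≤ I * J ^ k := by
    calc J ^ (k + 1) = J ^ k * J := pow_succ J k
      _ ≤ (I * J ^ (k - 1)) * J := Ideal.mul_mono_left base
      _ = I * (J ^ (k - 1) * J) := mul_assoc _ _ _
      _ = I * J ^ k := by rw [← pow_succ]; congr 2; omega
  -- J^(n+k) ≤ I^n * J^k
  have main : ∀ n : ℕ, J ^ (n + k) ≤ I ^ n * J ^ k := by
    intro n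
    induction n with
    | zero => simp
    | succ n ih =>
      calc J ^ (n + 1 + k) = J ^ (n + k) * J := by rw [← pow_succ]; congr 1; omega
        _ ≤ I ^ n * J ^ k * J := Ideal.mul_mono_left ih
        _ = I ^ n * J ^ (k + 1) := by rw [mul_assoc, ← pow_succ]
        _ ≤ I ^ n * (I * J ^ k) := Ideal.mul_mono_right step1
        _ = I ^ (n + 1) * J ^ k := by rw [pow_succ]; ring
  exact ⟨k, fun n => (main n).trans Ideal.mul_le_left⟩

lemma exists_pow_le_of_integral_finset {I : Ideal A} (S : Finset A)
    (hS : ∀ f ∈ S, IsIntegralOverIdeal I f) :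
    ∃ k : ℕ, ∀ n : ℕ, (I ⊔ Ideal.span (S : Set A)) ^ (n + k) ≤ I ^ n := by
  classical
  induction S using Finset.induction generalizing I with
  | empty => exact ⟨0, fun n => by simp⟩
  | @insert f S hfS ih =>
    have hf : IsIntegralOverIdeal I f := hS f (Finset.mem_insert_self f S)
    obtain ⟨k₁, hk₁⟩ := exists_pow_le_of_integral_singleton hf
    set I' : Ideal A := I ⊔ Ideal.span {f} with hI'
    have hS' : ∀ g ∈ S, IsIntegralOverIdeal I' g := fun g hg =>
      integral_mono le_sup_left (hS g (Finset.mem_insert_of_mem hg))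
    obtain ⟨k₂, hk₂⟩ := ih hS'
    refine ⟨k₂ + k₁, fun n => ?_⟩
    have heq : I ⊔ Ideal.span ((insert f S : Finset A) : Set A) =
        I' ⊔ Ideal.span (S : Set A) := by
      rw [hI', Finset.coe_insert, Ideal.span_insert, sup_assoc]
    rw [heq, show n + (k₂ + k₁) = (n + k₁) + k₂ by omega]
    exact (hk₂ (n + k₁)).trans (hk₁ n)

end Alg

section Analysis

variable {A : Type*} [CommRing A]

private lemma ennreal_div_trick (a b c : ℝ≥0∞) (hb0 : b ≠ 0) (hbt : b ≠ ⊤) :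
    a / c = a / b * (b / c) := by
  rw [div_eq_mul_inv, div_eq_mul_inv, div_eq_mul_inv, mul_assoc,
    ← mul_assoc b⁻¹, ENNReal.inv_mul_cancel hb0 hbt, one_mul]

lemma hilbertSamuelMult_le_of_le {I J : Ideal A} (h : I ≤ J) (d : ℕ) :
    hilbertSamuelMult J d ≤ hilbertSamuelMult I d := by
  refine limsup_le_limsup (Eventually.of_forall fun n => ?_)
  refine ENNReal.div_le_div_right (mul_le_mul_right ?_ _) _
  exact moduleLength_quot_mono (Ideal.pow_right_mono h n)

lemma hilbertSamuelMult_le_of_pow_le {I J : Ideal A} {k : ℕ}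
    (h : ∀ n : ℕ, J ^ (n + k) ≤ I ^ n) (d : ℕ) :
    hilbertSamuelMult I d ≤ hilbertSamuelMult J d := by
  set u : ℕ → ℝ≥0∞ := fun n =>
    (Nat.factorial d : ℝ≥0∞) * moduleLength A (A ⧸ J ^ n) / (n : ℝ≥0∞) ^ d with hu
  set c : ℕ → ℝ≥0∞ := fun n => (((n : ℝ≥0∞) + k) / (n : ℝ≥0∞)) ^ d with hc
  have hctend : Tendsto c atTop (𝓝 1) := by
    have h1 : Tendsto (fun n : ℕ => ((n : ℝ≥0∞) + k) / (n : ℝ≥0∞)) atTop (𝓝 1) := by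
      have heq : (fun n : ℕ => 1 + (k : ℝ≥0∞) / (n : ℝ≥0∞)) =ᶠ[atTop]
          (fun n : ℕ => ((n : ℝ≥0∞) + k) / (n : ℝ≥0∞)) := by
        filter_upwards [eventually_ge_atTop 1] with n hn
        rw [ENNReal.add_div, ENNReal.div_self (Nat.cast_ne_zero.2 (by omega)) (by simp)]
      have h2 : Tendsto (fun n : ℕ => 1 + (k : ℝ≥0∞) / (n : ℝ≥0∞)) atTop (𝓝 1) := by
        have h3 : Tendsto (fun n : ℕ => (k : ℝ≥0∞) / (n : ℝ≥0∞)) atTop (𝓝 0) := by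
          simp only [ENNReal.div_eq_inv_mul]
          have := ENNReal.Tendsto.const_mul (a := (k : ℝ≥0∞))
            ENNReal.tendsto_inv_nat_nhds_zero (Or.inr (by simp))
          simpa [mul_comm] using this
        have := tendsto_const_nhds.add h3 (f := fun _ : ℕ => (1 : ℝ≥0∞))
        simpa using this
      exact Tendsto.congr' heq h2
    have hpow : Continuous fun x : ℝ≥0∞ => x ^ d := ENNReal.continuous_pow d
    have := (hpow.tendsto 1).comp h1
    simpa [hc, Function.comp_def] using this
  have hclimsup : limsup c atTop = 1 := hctend.limsup_eq
  have key : ∀ᶠ n : ℕ in atTop,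
      (Nat.factorial d : ℝ≥0∞) * moduleLength A (A ⧸ I ^ n) / (n : ℝ≥0∞) ^ d ≤
        ((fun n => u (n + k)) * c) n := by
    filter_upwards [eventually_ge_atTop 1] with n hn
    have hlen : moduleLength A (A ⧸ I ^ n) ≤ moduleLength A (A ⧸ J ^ (n + k)) :=
      moduleLength_quot_mono (h n)
    have step1 : (Nat.factorial d : ℝ≥0∞) * moduleLength A (A ⧸ I ^ n) / (n : ℝ≥0∞) ^ d ≤
        (Nat.factorial d : ℝ≥0∞) * moduleLength A (A ⧸ J ^ (n + k)) / (n : ℝ≥0∞) ^ d :=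
      ENNReal.div_le_div_right (mul_le_mul_right hlen _) _
    refine step1.trans (le_of_eq ?_)
    have hb0 : (((n : ℝ≥0∞) + k)) ^ d ≠ 0 := by
      apply pow_ne_zero
      intro hcontra
      have : (n : ℝ≥0∞) = 0 := by
        have := add_eq_zero.1 hcontra
        exact this.1
      simp only [Nat.cast_eq_zero] at this
      omega
    have hbt : (((n : ℝ≥0∞) + k)) ^ d ≠ ⊤ := by
      apply pow_ne_top
      simp [ENNReal.add_ne_top]
    have := ennreal_div_trick
      ((Nat.factorial d : ℝ≥0∞) * moduleLength A (A ⧸ J ^ (n + k)))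
      (((n : ℝ≥0∞) + k) ^ d) ((n : ℝ≥0∞) ^ d) hb0 hbt
    rw [this]
    simp only [Pi.mul_apply, hu, hc]
    congr 1
    · congr 1
      push_cast
      ring
    · rw [div_eq_mul_inv, div_eq_mul_inv, mul_pow, ENNReal.inv_pow]
  calc hilbertSamuelMult I d ≤ limsup ((fun n => u (n + k)) * c) atTop :=
        limsup_le_limsup key
    _ ≤ limsup (fun n => u (n + k)) atTop * limsup c atTop := by
        refine ENNReal.limsup_mul_le' ?_ ?_
        · right; rw [hclimsup]; simp
        · right; rw [hclimsup]; simp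
    _ = limsup (fun n => u (n + k)) atTop := by rw [hclimsup, mul_one]
    _ = limsup u atTop := by
        have : (fun n : ℕ => u (n + k)) = u ∘ (fun n => n + k) := rfl
        rw [this, limsup_comp, map_add_atTop_eq_nat]
    _ = hilbertSamuelMult J d := rfl

end Analysis


/-- In a Noetherian local ring, two ideals primary for the maximal
ideal having the same integral closure have the same Hilbert–Samuel multiplicity. -/
theorem hilbertSamuelMult_eq_of_integralClosure_eq {A : Type*} [CommRing A]
    [IsNoetherianRing A] [IsLocalRing A] (d : ℕ) (hd : ringKrullDim A = d)
    (I₁ I₂ : Ideal A) (h₁ : I₁ ≠ ⊤) (h₂ : I₂ ≠ ⊤)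
    (hrad₁ : I₁.radical = IsLocalRing.maximalIdeal A)
    (hrad₂ : I₂.radical = IsLocalRing.maximalIdeal A)
    (hcl : ∀ f : A, IsIntegralOverIdeal I₁ f ↔ IsIntegralOverIdeal I₂ f) :
    hilbertSamuelMult I₁ d = hilbertSamuelMult I₂ d := by
  obtain ⟨S₂, hS₂⟩ : I₂.FG := IsNoetherian.noetherian I₂
  obtain ⟨S₁, hS₁⟩ : I₁.FG := IsNoetherian.noetherian I₁
  have hint₂ : ∀ f ∈ S₂, IsIntegralOverIdeal I₁ f := fun f hf =>
    (hcl f).2 (mem_integral_self (hS₂ ▸ Ideal.subset_span hf))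
  have hint₁ : ∀ f ∈ S₁, IsIntegralOverIdeal I₂ f := fun f hf =>
    (hcl f).1 (mem_integral_self (hS₁ ▸ Ideal.subset_span hf))
  obtain ⟨k₁, hk₁⟩ := exists_pow_le_of_integral_finset (I := I₁) S₂ hint₂
  obtain ⟨k₂, hk₂⟩ := exists_pow_le_of_integral_finset (I := I₂) S₁ hint₁
  rw [hS₂] at hk₁
  rw [hS₁] at hk₂
  have hJ : I₁ ⊔ I₂ = I₂ ⊔ I₁ := sup_comm _ _
  have e₁ : hilbertSamuelMult I₁ d = hilbertSamuelMult (I₁ ⊔ I₂) d :=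
    le_antisymm (hilbertSamuelMult_le_of_pow_le hk₁ d)
      (hilbertSamuelMult_le_of_le le_sup_left d)
  have e₂ : hilbertSamuelMult I₂ d = hilbertSamuelMult (I₂ ⊔ I₁) d :=
    le_antisymm (hilbertSamuelMult_le_of_pow_le hk₂ d)
      (hilbertSamuelMult_le_of_le le_sup_left d)
  rw [e₁, e₂, hJ]
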